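/- Let S be a nonempty finite index set and for each x ∈ S let H_x be a d×d complex Hermitian matrix with 0 ⪯ H_x ⪯ I. Let H_S = (1/|S|) Σ_{x∈S} H_x, let ρ be a d×d density matrix, and let η ∈ (0, 1]. Then ‖ (1/|S|) Σ_{x∈S} (I − ηH_x) ρ (I − ηH_x) − e^{−ηH_S} ρ e^{−ηH_S} ‖₁ ≤ 4η². Equivalently, the average over x of (I − ηH_x)ρ(I − ηH_x) equals e^{−ηH_S} ρ e^{−ηH_S} + η²·O for a Hermitian matrix O with trace norm at most 4. -/

import Mathlib

open Matrix
open scoped ComplexOrder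

/-- The trace norm (sum of singular values) of a complex square matrix. -/
noncomputable def traceNorm {d : ℕ} (A : Matrix (Fin d) (Fin d) ℂ) : ℝ :=
  ((((Matrix.posSemidef_conjTranspose_mul_self A).1.eigenvectorUnitary : Matrix (Fin d) (Fin d) ℂ) *
      diagonal (((↑) : ℝ → ℂ) ∘ (√·) ∘ (Matrix.posSemidef_conjTranspose_mul_self A).1.eigenvalues) *
      (star (Matrix.posSemidef_conjTranspose_mul_self A).1.eigenvectorUnitary :
        Matrix (Fin d) (Fin d) ℂ)).trace).re

/-- The matrix exponential of a complex square matrix. -/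
noncomputable def mexp {d : ℕ} (A : Matrix (Fin d) (Fin d) ℂ) : Matrix (Fin d) (Fin d) ℂ :=
  NormedSpace.exp A


section Aux
variable {d : ℕ}

open scoped MatrixOrder in
noncomputable def Matrix.PosSemidef.sqrt {M : Matrix (Fin d) (Fin d) ℂ} (_hM : M.PosSemidef) :
    Matrix (Fin d) (Fin d) ℂ :=
  CFC.sqrt M

open scoped MatrixOrder in
lemma Matrix.PosSemidef.posSemidef_sqrt {M : Matrix (Fin d) (Fin d) ℂ} (hM : M.PosSemidef) :
    hM.sqrt.PosSemidef :=
  Matrix.nonneg_iff_posSemidef.mp (CFC.sqrt_nonneg M)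

open scoped MatrixOrder in
lemma Matrix.PosSemidef.sqrt_mul_self {M : Matrix (Fin d) (Fin d) ℂ} (hM : M.PosSemidef) :
    hM.sqrt * hM.sqrt = M :=
  CFC.sqrt_mul_sqrt_self M hM.nonneg

open scoped MatrixOrder in
lemma Matrix.PosSemidef.eq_sqrt_of_sq_eq {A : Matrix (Fin d) (Fin d) ℂ} (hA : A.PosSemidef)
    {B : Matrix (Fin d) (Fin d) ℂ} (hB : B.PosSemidef) (h : A ^ 2 = B) : A = hB.sqrt :=
  (CFC.sqrt_unique (a := B) (b := A) (by rw [← h, sq]) hA.nonneg).symm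

open scoped MatrixOrder in
lemma traceNorm_eq (A : Matrix (Fin d) (Fin d) ℂ) :
    traceNorm A = ((Matrix.posSemidef_conjTranspose_mul_self A).sqrt.trace).re := by
  have hP := Matrix.posSemidef_conjTranspose_mul_self A
  rw [Matrix.PosSemidef.sqrt, CFC.sqrt_eq_real_sqrt _ hP.nonneg, cfcₙ_eq_cfc,
    Matrix.IsHermitian.cfc_eq hP.1, Matrix.IsHermitian.cfc, Unitary.conjStarAlgAut_apply]
  rfl

lemma psd_smul_real {M : Matrix (Fin d) (Fin d) ℂ} (hM : M.PosSemidef) {c : ℝ} (hc : 0 ≤ c) :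
    ((c : ℂ) • M).PosSemidef := by
  refine Matrix.PosSemidef.of_dotProduct_mulVec_nonneg ?_ fun x => ?_
  · unfold Matrix.IsHermitian
    rw [conjTranspose_smul, hM.1.eq]
    simp [Complex.conj_ofReal]
  · have h0 : (0:ℂ) ≤ (c:ℂ) := by exact_mod_cast Complex.zero_le_real.mpr hc
    have := hM.dotProduct_mulVec_nonneg x
    calc (0:ℂ) ≤ (c:ℂ) * (star x ⬝ᵥ M.mulVec x) := mul_nonneg h0 this
      _ = star x ⬝ᵥ ((c:ℂ) • M).mulVec x := by
          rw [smul_mulVec, dotProduct_smul, smul_eq_mul]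

lemma psd_trace_re_nonneg {M : Matrix (Fin d) (Fin d) ℂ} (hM : M.PosSemidef) :
    0 ≤ M.trace.re := by
  have h : ∀ i, 0 ≤ (M i i).re := by
    intro i
    have := hM.dotProduct_mulVec_nonneg (Pi.single i 1)
    have h2 : star (Pi.single i 1) ⬝ᵥ M.mulVec (Pi.single i 1) = M i i := by
      simp [Matrix.mulVec_single, dotProduct, Pi.single_apply]
    rw [h2] at this
    exact (Complex.le_def.mp this).1
  rw [Matrix.trace]
  simpa [Complex.re_sum] using Finset.sum_nonneg fun i _ => h i

lemma re_trace_mul_nonneg {X Y : Matrix (Fin d) (Fin d) ℂ} (hX : X.PosSemidef)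
    (hY : Y.PosSemidef) : 0 ≤ (X * Y).trace.re := by
  have hs := hX.posSemidef_sqrt
  have h1 : X * Y = hX.sqrt * (hX.sqrt * Y) := by
    rw [← mul_assoc, hX.sqrt_mul_self]
  rw [h1, ← mul_assoc, ← Matrix.trace_mul_cycle]
  have : (hX.sqrt * Y * hX.sqrt).PosSemidef := by
    have := hY.mul_mul_conjTranspose_same hX.sqrt
    rwa [hs.1.eq] at this
  exact psd_trace_re_nonneg this

lemma psd_sum {ι : Type*} [Fintype ι] (M : ι → Matrix (Fin d) (Fin d) ℂ)
    (h : ∀ x, (M x).PosSemidef) : (∑ x, M x).PosSemidef := by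
  classical
  refine Finset.sum_induction _ _ (fun a b ha hb => ha.add hb) Matrix.PosSemidef.zero
    (fun x _ => h x)

lemma exp_neg_quad {x : ℝ} (hx : 0 ≤ x) : Real.exp (-x) ≤ 1 - x + x ^ 2 / 2 := by
  set g : ℝ → ℝ := fun t => 1 - t + t ^ 2 / 2 - Real.exp (-t) with hg
  have hderiv : ∀ t : ℝ, HasDerivAt g (-1 + t + Real.exp (-t)) t := by
    intro t
    have h1 : HasDerivAt (fun t : ℝ => Real.exp (-t)) (-Real.exp (-t)) t := by
      simpa using (hasDerivAt_neg t).exp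
    have h2 : HasDerivAt (fun t : ℝ => 1 - t + t ^ 2 / 2) (-1 + t) t := by
      have : HasDerivAt (fun t : ℝ => t ^ 2 / 2) t t := by
        simpa using (hasDerivAt_pow 2 t).div_const 2
      exact ((hasDerivAt_id' t).const_sub 1).add this
    have := h2.sub h1
    rw [sub_neg_eq_add] at this
    exact this
  have hmono : MonotoneOn g (Set.Ici (0:ℝ)) := by
    refine monotoneOn_of_deriv_nonneg (convex_Ici 0) ?_ ?_ ?_
    · exact (Continuous.continuousOn (by continuity))
    · intro t ht
      exact (hderiv t).differentiableAt.differentiableWithinAt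
    · intro t ht
      rw [(hderiv t).deriv]
      have := Real.add_one_le_exp (-t)
      simp only [interior_Ici, Set.mem_Ioi] at ht
      linarith
  have h0 : g 0 ≤ g x := hmono (Set.self_mem_Ici) hx hx
  simp only [hg] at h0
  simp at h0
  linarith [h0]

lemma psd_diag_re_nonneg {M : Matrix (Fin d) (Fin d) ℂ} (hM : M.PosSemidef) (i : Fin d) :
    0 ≤ (M i i).re := by
  have h := hM.dotProduct_mulVec_nonneg (Pi.single i 1)
  have h2 : star (Pi.single i 1) ⬝ᵥ M.mulVec (Pi.single i 1) = M i i := by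
    simp [Matrix.mulVec_single, dotProduct, Pi.single_apply]
  rw [h2] at h
  exact (Complex.le_def.mp h).1

lemma traceNorm_le_of_sandwich {D P Q : Matrix (Fin d) (Fin d) ℂ}
    (hP : P.PosSemidef) (hQ : Q.PosSemidef)
    (hPD : (P - D).PosSemidef) (hQD : (Q + D).PosSemidef) :
    traceNorm D ≤ P.trace.re + Q.trace.re := by
  classical
  have hD : D.IsHermitian := by
    have h := hP.1.sub hPD.1
    simpa using h
  set U : Matrix (Fin d) (Fin d) ℂ := (hD.eigenvectorUnitary : Matrix (Fin d) (Fin d) ℂ)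
    with hUdef
  have hU1 : U * Uᴴ = 1 := by
    have := (Matrix.mem_unitaryGroup_iff).mp hD.eigenvectorUnitary.2
    simpa [hUdef, Matrix.star_eq_conjTranspose] using this
  have hU2 : Uᴴ * U = 1 := by
    have := (Matrix.mem_unitaryGroup_iff').mp hD.eigenvectorUnitary.2
    simpa [hUdef, Matrix.star_eq_conjTranspose] using this
  set lam := hD.eigenvalues with hlam
  have hspec : D = U * diagonal (fun i => (lam i : ℂ)) * Uᴴ := by
    have := hD.spectral_theorem
    simpa [hUdef, Matrix.star_eq_conjTranspose, Function.comp_def] using this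
  have hdiag : Uᴴ * D * U = diagonal (fun i => (lam i : ℂ)) := by
    have := hD.conjStarAlgAut_star_eigenvectorUnitary
    simpa [hUdef, Matrix.star_eq_conjTranspose, Function.comp_def] using this
  -- the absolute value matrix
  set absD : Matrix (Fin d) (Fin d) ℂ := U * diagonal (fun i => ((|lam i| : ℝ) : ℂ)) * Uᴴ
    with habsD
  have habs : absD.PosSemidef := by
    have hdpsd : (diagonal (fun i => ((|lam i| : ℝ) : ℂ))).PosSemidef :=
      Matrix.posSemidef_diagonal_iff.mpr fun i => Complex.zero_le_real.mpr (abs_nonneg _)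
    exact hdpsd.mul_mul_conjTranspose_same U
  have hsq : absD ^ 2 = Dᴴ * D := by
    rw [pow_two, hD.eq, habsD, hspec]
    have h2 : ∀ (f : Fin d → ℂ),
        U * diagonal f * Uᴴ * (U * diagonal f * Uᴴ) = U * (diagonal f * diagonal f) * Uᴴ := by
      intro f
      calc U * diagonal f * Uᴴ * (U * diagonal f * Uᴴ)
          = U * diagonal f * (Uᴴ * U) * diagonal f * Uᴴ := by noncomm_ring
        _ = U * (diagonal f * diagonal f) * Uᴴ := by rw [hU2]; noncomm_ring
    rw [h2, h2, diagonal_mul_diagonal, diagonal_mul_diagonal]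
    have heq : (fun i => ((|lam i| : ℝ) : ℂ) * ((|lam i| : ℝ) : ℂ))
        = fun i => ((lam i : ℝ) : ℂ) * ((lam i : ℝ) : ℂ) := by
      funext i
      rw [← Complex.ofReal_mul, ← Complex.ofReal_mul, abs_mul_abs_self]
    rw [heq]
  have hsqrt : absD = (Matrix.posSemidef_conjTranspose_mul_self D).sqrt :=
    habs.eq_sqrt_of_sq_eq _ hsq
  have htrace_conj : ∀ X : Matrix (Fin d) (Fin d) ℂ, (U * X * Uᴴ).trace = X.trace := by
    intro X
    rw [Matrix.trace_mul_cycle, hU2, one_mul]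
  have htrace_conj' : ∀ X : Matrix (Fin d) (Fin d) ℂ, (Uᴴ * X * U).trace = X.trace := by
    intro X
    rw [Matrix.trace_mul_cycle, hU1, one_mul]
  have htn : traceNorm D = ∑ i, |lam i| := by
    rw [traceNorm_eq, ← hsqrt, habsD, htrace_conj, Matrix.trace_diagonal]
    rw [Complex.re_sum]
    norm_num
  -- diagonal entries of conjugated P and Q
  have hPD' := hPD.conjTranspose_mul_mul_same U
  have hQD' := hQD.conjTranspose_mul_mul_same U
  have hPc := hP.conjTranspose_mul_mul_same U
  have hQc := hQ.conjTranspose_mul_mul_same U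
  have hkey : ∀ i, |lam i| ≤ ((Uᴴ * P * U) i i).re + ((Uᴴ * Q * U) i i).re := by
    intro i
    have e1 : Uᴴ * (P - D) * U = Uᴴ * P * U - diagonal (fun i => (lam i : ℂ)) := by
      rw [← hdiag]; noncomm_ring
    have e2 : Uᴴ * (Q + D) * U = Uᴴ * Q * U + diagonal (fun i => (lam i : ℂ)) := by
      rw [← hdiag]; noncomm_ring
    have h1 := psd_diag_re_nonneg hPD' i
    have h2 := psd_diag_re_nonneg hQD' i
    rw [e1] at h1; rw [e2] at h2
    simp only [Matrix.sub_apply, Matrix.add_apply, Matrix.diagonal_apply_eq,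
      Complex.sub_re, Complex.add_re, Complex.ofReal_re] at h1 h2
    have h3 := psd_diag_re_nonneg hPc i
    have h4 := psd_diag_re_nonneg hQc i
    rw [abs_le]; constructor <;> linarith
  rw [htn]
  calc ∑ i, |lam i| ≤ ∑ i, (((Uᴴ * P * U) i i).re + ((Uᴴ * Q * U) i i).re) :=
        Finset.sum_le_sum fun i _ => hkey i
    _ = (Uᴴ * P * U).trace.re + (Uᴴ * Q * U).trace.re := by
        rw [Finset.sum_add_distrib, Matrix.trace, Matrix.trace, Complex.re_sum,
          Complex.re_sum]
        rfl
    _ = P.trace.re + Q.trace.re := by rw [htrace_conj', htrace_conj']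

variable {d : ℕ}

noncomputable def cal (V : Matrix (Fin d) (Fin d) ℂ) (μ : Fin d → ℝ) (f : ℝ → ℝ) :
    Matrix (Fin d) (Fin d) ℂ :=
  V * Matrix.diagonal (fun i => ((f (μ i) : ℝ) : ℂ)) * Vᴴ

variable (V : Matrix (Fin d) (Fin d) ℂ) (μ : Fin d → ℝ)

lemma cal_herm (f : ℝ → ℝ) : (cal V μ f).IsHermitian := by
  unfold cal Matrix.IsHermitian
  have h : (Matrix.diagonal (fun i => ((f (μ i) : ℝ) : ℂ)))ᴴ
      = Matrix.diagonal (fun i => ((f (μ i) : ℝ) : ℂ)) := by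
    ext i j
    by_cases h : j = i
    · simp [Matrix.conjTranspose_apply, Matrix.diagonal_apply, h, Complex.conj_ofReal]
    · have h' : ¬ i = j := fun hh => h hh.symm
      simp [Matrix.conjTranspose_apply, Matrix.diagonal_apply, h, h']
  rw [conjTranspose_mul, conjTranspose_mul, conjTranspose_conjTranspose, h, mul_assoc]

lemma cal_psd (f : ℝ → ℝ) (h : ∀ i, 0 ≤ f (μ i)) : (cal V μ f).PosSemidef := by
  have hd : (Matrix.diagonal (fun i => ((f (μ i) : ℝ) : ℂ))).PosSemidef :=
    Matrix.posSemidef_diagonal_iff.mpr fun i => Complex.zero_le_real.mpr (h i)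
  exact hd.mul_mul_conjTranspose_same V

lemma cal_mul (hV2 : Vᴴ * V = 1) (f g : ℝ → ℝ) :
    cal V μ f * cal V μ g = cal V μ (fun x => f x * g x) := by
  unfold cal
  have h1 : V * diagonal (fun i => ((f (μ i) : ℝ) : ℂ)) * Vᴴ
        * (V * diagonal (fun i => ((g (μ i) : ℝ) : ℂ)) * Vᴴ)
      = V * (diagonal (fun i => ((f (μ i) : ℝ) : ℂ)) * (Vᴴ * V)
        * diagonal (fun i => ((g (μ i) : ℝ) : ℂ))) * Vᴴ := by noncomm_ring
  rw [h1, hV2, mul_one, diagonal_mul_diagonal]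
  have h2 : (fun i => ((f (μ i) : ℝ) : ℂ) * ((g (μ i) : ℝ) : ℂ))
      = fun i => ((f (μ i) * g (μ i) : ℝ) : ℂ) := by
    funext i; rw [← Complex.ofReal_mul]
  rw [h2]

lemma cal_add (f g : ℝ → ℝ) : cal V μ f + cal V μ g = cal V μ (fun x => f x + g x) := by
  unfold cal
  rw [← add_mul, ← mul_add, diagonal_add]
  have h2 : (fun i => ((f (μ i) : ℝ) : ℂ) + ((g (μ i) : ℝ) : ℂ))
      = fun i => ((f (μ i) + g (μ i) : ℝ) : ℂ) := by
    funext i; rw [← Complex.ofReal_add]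
  rw [h2]

lemma cal_sub (f g : ℝ → ℝ) : cal V μ f - cal V μ g = cal V μ (fun x => f x - g x) := by
  unfold cal
  rw [← sub_mul, ← mul_sub, diagonal_sub]
  have h2 : (fun i => ((f (μ i) : ℝ) : ℂ) - ((g (μ i) : ℝ) : ℂ))
      = fun i => ((f (μ i) - g (μ i) : ℝ) : ℂ) := by
    funext i; rw [← Complex.ofReal_sub]
  rw [h2]

lemma cal_smul (c : ℝ) (f : ℝ → ℝ) : (c : ℂ) • cal V μ f = cal V μ (fun x => c * f x) := by
  unfold cal
  rw [← smul_mul_assoc, ← mul_smul_comm, ← Matrix.diagonal_smul]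
  have h2 : ((c : ℂ) • fun i => ((f (μ i) : ℝ) : ℂ))
      = fun i => ((c * f (μ i) : ℝ) : ℂ) := by
    funext i; rw [Pi.smul_apply, smul_eq_mul, ← Complex.ofReal_mul]
  rw [h2]

lemma cal_const (hV1 : V * Vᴴ = 1) (c : ℝ) : cal V μ (fun _ => c) = (c : ℂ) • 1 := by
  unfold cal
  have h2 : (Matrix.diagonal (fun _ : Fin d => ((c : ℝ) : ℂ))) = (c : ℂ) • 1 := by
    ext i j
    by_cases h : i = j <;>
      simp [Matrix.diagonal_apply, Matrix.one_apply, Matrix.smul_apply, h]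
  rw [h2, mul_smul_comm, mul_one, smul_mul_assoc, hV1]


lemma tr_conj_le {ρ X : Matrix (Fin d) (Fin d) ℂ} (hρ : ρ.PosSemidef) (hρtr : ρ.trace = 1)
    {c : ℝ} (hc : ((c : ℂ) • 1 - X * X).PosSemidef) :
    (X * ρ * X).trace.re ≤ c := by
  have h1 : (X * ρ * X).trace = (ρ * (X * X)).trace := by
    rw [Matrix.trace_mul_comm (X * ρ) X, ← mul_assoc, Matrix.trace_mul_comm (X * X) ρ]
  have h2 := re_trace_mul_nonneg hρ hc
  have h3 : (ρ * ((c : ℂ) • 1 - X * X)).trace = (c : ℂ) - (ρ * (X * X)).trace := by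
    rw [mul_sub, Matrix.trace_sub, mul_smul_comm, mul_one, Matrix.trace_smul, hρtr,
      smul_eq_mul, mul_one]
  rw [h3] at h2
  rw [h1]
  simp only [Complex.sub_re, Complex.ofReal_re] at h2
  linarith

lemma one_sub_sq_psd {Hx : Matrix (Fin d) (Fin d) ℂ} (h0 : Hx.PosSemidef)
    (h1 : (1 - Hx).PosSemidef) : (((1 : ℝ) : ℂ) • 1 - Hx * Hx).PosSemidef := by
  have hss := h0.sqrt_mul_self
  have hherm : h0.sqrt.conjTranspose = h0.sqrt := h0.posSemidef_sqrt.1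
  have hconj : (h0.sqrt * (1 - Hx) * h0.sqrt).PosSemidef := by
    have := h1.mul_mul_conjTranspose_same h0.sqrt
    rwa [hherm] at this
  have e : h0.sqrt * (1 - Hx) * h0.sqrt = Hx - Hx * Hx := by
    have e1 : h0.sqrt * (1 - Hx) * h0.sqrt
        = h0.sqrt * h0.sqrt - (h0.sqrt * h0.sqrt) * (h0.sqrt * h0.sqrt) := by
      rw [show (1 : Matrix (Fin d) (Fin d) ℂ) - Hx = 1 - h0.sqrt * h0.sqrt by rw [hss]]
      noncomm_ring
    rw [e1, hss]
  have e2 : ((1 : ℝ) : ℂ) • 1 - Hx * Hx = (1 - Hx) + (Hx - Hx * Hx) := by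
    simp only [Complex.ofReal_one, one_smul]
    abel
  rw [e2, ← e]
  exact h1.add hconj

lemma eig_le {A : Matrix (Fin d) (Fin d) ℂ} (hA : A.IsHermitian) {c : ℝ}
    (h : ((c : ℂ) • 1 - A).PosSemidef) (i : Fin d) : hA.eigenvalues i ≤ c := by
  have hv := hA.mulVec_eigenvectorBasis i
  set v : Fin d → ℂ := ⇑(hA.eigenvectorBasis i) with hvdef
  have hvn : star v ⬝ᵥ v = 1 := by
    have h1 : (inner ℂ (hA.eigenvectorBasis i) (hA.eigenvectorBasis i) : ℂ) = 1 := by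
      rw [inner_self_eq_norm_sq_to_K, hA.eigenvectorBasis.orthonormal.1 i]
      norm_num
    rw [EuclideanSpace.inner_eq_star_dotProduct, dotProduct_comm] at h1
    exact h1
  have h2 := h.dotProduct_mulVec_nonneg v
  rw [sub_mulVec, smul_mulVec, one_mulVec, hv, dotProduct_sub, dotProduct_smul,
    dotProduct_smul, hvn] at h2
  have h3 : (0 : ℂ) ≤ ((c - hA.eigenvalues i : ℝ) : ℂ) := by
    convert h2 using 1
    push_cast
    simp [smul_eq_mul]
  have := Complex.zero_le_real.mp h3
  linarith

lemma expand_W_add (a b : ℝ) (hab : a * b = 1) (S E r : Matrix (Fin d) (Fin d) ℂ)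
    (hS : Sᴴ = S) (hE : Eᴴ = E) (hr : rᴴ = r) :
    ((a : ℂ) • (S * r) + (b : ℂ) • (E * r)) * ((a : ℂ) • (S * r) + (b : ℂ) • (E * r))ᴴ
      = ((a ^ 2 : ℝ) : ℂ) • (S * (r * r) * S) + (S * (r * r) * E + E * (r * r) * S)
        + ((b ^ 2 : ℝ) : ℂ) • (E * (r * r) * E) := by
  have hab' : (a : ℂ) * (b : ℂ) = 1 := by
    rw [← Complex.ofReal_mul, hab, Complex.ofReal_one]
  have hstar : (((a : ℂ) • (S * r) + (b : ℂ) • (E * r))ᴴ)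
      = (a : ℂ) • (r * S) + (b : ℂ) • (r * E) := by
    simp [conjTranspose_add, conjTranspose_smul, conjTranspose_mul, hS, hE, hr,
      Complex.conj_ofReal]
  rw [hstar]
  simp only [add_mul, mul_add, smul_mul_assoc, mul_smul_comm, smul_smul, smul_add, mul_assoc]
  push_cast
  rw [hab', show (b:ℂ) * (a:ℂ) = 1 by rw [mul_comm]; exact hab']
  module

lemma expand_W_sub (a b : ℝ) (hab : a * b = 1) (S E r : Matrix (Fin d) (Fin d) ℂ)
    (hS : Sᴴ = S) (hE : Eᴴ = E) (hr : rᴴ = r) :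
    ((a : ℂ) • (S * r) - (b : ℂ) • (E * r)) * ((a : ℂ) • (S * r) - (b : ℂ) • (E * r))ᴴ
      = ((a ^ 2 : ℝ) : ℂ) • (S * (r * r) * S) - (S * (r * r) * E + E * (r * r) * S)
        + ((b ^ 2 : ℝ) : ℂ) • (E * (r * r) * E) := by
  have hab' : (a : ℂ) * (b : ℂ) = 1 := by
    rw [← Complex.ofReal_mul, hab, Complex.ofReal_one]
  have hstar : (((a : ℂ) • (S * r) - (b : ℂ) • (E * r))ᴴ)
      = (a : ℂ) • (r * S) - (b : ℂ) • (r * E) := by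
    simp [conjTranspose_sub, conjTranspose_smul, conjTranspose_mul, hS, hE, hr,
      Complex.conj_ofReal]
  rw [hstar]
  simp only [sub_mul, mul_sub, smul_mul_assoc, mul_smul_comm, smul_smul, smul_sub, mul_assoc]
  push_cast
  rw [hab', show (b:ℂ) * (a:ℂ) = 1 by rw [mul_comm]; exact hab']
  module

end Aux

set_option maxHeartbeats 2000000 in
/-- Lemma S2: a single step of the QAL update, averaged over the training set,
is the imaginary time evolution up to a second-order error of trace norm `≤ 4η²`. -/
theorem qal_single_step_imaginary_time {d : ℕ} (ι : Type) [Fintype ι] [Nonempty ι]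
    (H : ι → Matrix (Fin d) (Fin d) ℂ)
    (hH0 : ∀ x, (H x).PosSemidef) (hH1 : ∀ x, (1 - H x).PosSemidef)
    (HS : Matrix (Fin d) (Fin d) ℂ)
    (hHS : HS = (Fintype.card ι : ℂ)⁻¹ • ∑ x : ι, H x)
    (ρ : Matrix (Fin d) (Fin d) ℂ) (hρ : ρ.PosSemidef) (hρtr : ρ.trace = 1)
    (η : ℝ) (hη : η ∈ Set.Ioc (0 : ℝ) 1) :
    traceNorm ((Fintype.card ι : ℂ)⁻¹ •
        ∑ x : ι, (1 - (η : ℂ) • H x) * ρ * (1 - (η : ℂ) • H x)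
      - mexp (-((η : ℂ) • HS)) * ρ * mexp (-((η : ℂ) • HS))) ≤ 4 * η ^ 2 := by
  classical
  obtain ⟨hη0, hη1⟩ := hη
  have hηne : η ≠ 0 := ne_of_gt hη0
  set N : ℂ := (Fintype.card ι : ℂ) with hNdef
  have hN : N ≠ 0 := by
    rw [hNdef]
    exact_mod_cast Nat.cast_ne_zero.mpr Fintype.card_ne_zero
  have hNinv : N⁻¹ = (((Fintype.card ι : ℝ)⁻¹ : ℝ) : ℂ) := by
    rw [hNdef, Complex.ofReal_inv, Complex.ofReal_natCast]
  -- positivity facts for HS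
  have hsumH : (∑ x : ι, H x).PosSemidef := psd_sum _ hH0
  have hNsmul : ∀ M : Matrix (Fin d) (Fin d) ℂ, N⁻¹ • ((Fintype.card ι) • M) = M := by
    intro M
    rw [← Nat.cast_smul_eq_nsmul ℂ, smul_smul]
    show (N⁻¹ * N) • M = M
    rw [inv_mul_cancel₀ hN, one_smul]
  have hHSpsd : HS.PosSemidef := by
    rw [hHS, hNinv]
    exact psd_smul_real hsumH (by positivity)
  have hIHS : (1 - HS).PosSemidef := by
    have h1 : (1 : Matrix (Fin d) (Fin d) ℂ) - HS = N⁻¹ • ∑ x : ι, (1 - H x) := by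
      rw [Finset.sum_sub_distrib, Finset.sum_const, Finset.card_univ, smul_sub, hNsmul, hHS]
    rw [h1, hNinv]
    exact psd_smul_real (psd_sum _ hH1) (by positivity)
  set A : Matrix (Fin d) (Fin d) ℂ := (η : ℂ) • HS with hAdef
  have hApsd : A.PosSemidef := psd_smul_real hHSpsd hη0.le
  have hAH : A.IsHermitian := hApsd.1
  have hηA : (((η : ℝ) : ℂ) • 1 - A).PosSemidef := by
    have he : ((η : ℝ) : ℂ) • (1 : Matrix (Fin d) (Fin d) ℂ) - A = (η : ℂ) • (1 - HS) := by
      rw [smul_sub, hAdef]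
    rw [he]
    exact psd_smul_real hIHS hη0.le
  -- spectral data of A
  set V : Matrix (Fin d) (Fin d) ℂ := (hAH.eigenvectorUnitary : Matrix (Fin d) (Fin d) ℂ)
    with hVdef
  have hV1 : V * Vᴴ = 1 := by
    have := (Matrix.mem_unitaryGroup_iff).mp hAH.eigenvectorUnitary.2
    simpa [hVdef, Matrix.star_eq_conjTranspose] using this
  have hV2 : Vᴴ * V = 1 := by
    have := (Matrix.mem_unitaryGroup_iff').mp hAH.eigenvectorUnitary.2
    simpa [hVdef, Matrix.star_eq_conjTranspose] using this
  set μ : Fin d → ℝ := hAH.eigenvalues with hμdef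
  have hμ0 : ∀ i, 0 ≤ μ i := fun i => hApsd.eigenvalues_nonneg i
  have hμη : ∀ i, μ i ≤ η := fun i => eig_le hAH hηA i
  have hAcal : A = cal V μ (fun x => x) := by
    have := hAH.spectral_theorem
    unfold cal
    simpa [hVdef, hμdef, Matrix.star_eq_conjTranspose, Function.comp_def] using this
  -- exponential of -A
  have hBcal : mexp (-A) = cal V μ (fun x => Real.exp (-x)) := by
    have hVu : IsUnit V := by
      have : Invertible V := invertibleOfRightInverse V Vᴴ hV1
      exact isUnit_of_invertible V
    have hVinv : V⁻¹ = Vᴴ := inv_eq_right_inv hV1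
    have hnegA : -A = V * Matrix.diagonal (fun i => ((-μ i : ℝ) : ℂ)) * V⁻¹ := by
      rw [hVinv, hAcal]
      unfold cal
      have hneg : (Matrix.diagonal fun i => ((-μ i : ℝ) : ℂ))
          = -(Matrix.diagonal fun i => (((fun x : ℝ => x) (μ i) : ℝ) : ℂ)) := by
        ext i j
        by_cases h : i = j <;> simp [Matrix.diagonal_apply, h]
      rw [hneg, Matrix.mul_neg, Matrix.neg_mul]
    unfold mexp
    rw [hnegA]
    rw [Matrix.exp_conj V _ hVu]
    rw [hVinv]
    unfold cal
    rw [Matrix.exp_diagonal]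
    have hfun : (NormedSpace.exp fun i => ((-μ i : ℝ) : ℂ))
        = fun i => ((Real.exp (-μ i) : ℝ) : ℂ) := by
      funext i
      show NormedSpace.exp (fun i => ((-μ i : ℝ) : ℂ)) i = ((Real.exp (-μ i) : ℝ) : ℂ)
      rw [Pi.coe_exp, ← Complex.exp_eq_exp_ℂ, ← Complex.ofReal_exp]
    rw [hfun]
  set Bm : Matrix (Fin d) (Fin d) ℂ := mexp (-A) with hBmdef
  -- the functions fS and fE
  set fS : ℝ → ℝ := fun x => (1 - x) + Real.exp (-x) with hfS
  set fE : ℝ → ℝ := fun x => Real.exp (-x) - (1 - x) with hfE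
  set S : Matrix (Fin d) (Fin d) ℂ := cal V μ fS with hSset
  set E : Matrix (Fin d) (Fin d) ℂ := cal V μ fE with hEset
  have hSH : Sᴴ = S := cal_herm V μ fS
  have hEH : Eᴴ = E := cal_herm V μ fE
  have h1cal : (1 : Matrix (Fin d) (Fin d) ℂ) = cal V μ (fun _ => 1) := by
    rw [cal_const V μ hV1 1]
    simp
  have hSdef : S = (1 - A) + Bm := by
    rw [hSset, hBcal, h1cal, hAcal, cal_sub, cal_add]
  have hEdef : E = Bm - (1 - A) := by
    rw [hEset, hBcal, h1cal, hAcal, cal_sub, cal_sub]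
  -- square root of rho
  set r : Matrix (Fin d) (Fin d) ℂ := hρ.sqrt with hrdef
  have hrr : r * r = ρ := hρ.sqrt_mul_self
  have hrH : rᴴ = r := hρ.posSemidef_sqrt.1
  -- averaged K
  set Kbar : Matrix (Fin d) (Fin d) ℂ := N⁻¹ • ∑ x : ι, H x * ρ * H x with hKdef
  have hKpsd : Kbar.PosSemidef := by
    rw [hKdef, hNinv]
    refine psd_smul_real (psd_sum _ fun x => ?_) (by positivity)
    have := hρ.mul_mul_conjTranspose_same (H x)
    rwa [(hH0 x).1.eq] at this
  have hSpsd : (S * ρ * S).PosSemidef := by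
    have := hρ.mul_mul_conjTranspose_same S
    rwa [hSH] at this
  have hEpsd : (E * ρ * E).PosSemidef := by
    have := hρ.mul_mul_conjTranspose_same E
    rwa [hEH] at this
  have hAρA : (A * ρ * A).PosSemidef := by
    have := hρ.mul_mul_conjTranspose_same A
    rwa [hAH.eq] at this
  -- sandwich matrices
  set P : Matrix (Fin d) (Fin d) ℂ := ((η ^ 2 : ℝ) : ℂ) • Kbar
      + ((η ^ 2 / 8 : ℝ) : ℂ) • (S * ρ * S) + ((2 / η ^ 2 : ℝ) : ℂ) • (E * ρ * E) with hPdef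
  set Q : Matrix (Fin d) (Fin d) ℂ := A * ρ * A
      + ((η ^ 2 / 8 : ℝ) : ℂ) • (S * ρ * S) + ((2 / η ^ 2 : ℝ) : ℂ) • (E * ρ * E) with hQdef
  have hPpsd : P.PosSemidef := by
    rw [hPdef]
    exact ((psd_smul_real hKpsd (by positivity)).add
      (psd_smul_real hSpsd (by positivity))).add (psd_smul_real hEpsd (by positivity))
  have hQpsd : Q.PosSemidef := by
    rw [hQdef]
    exact (hAρA.add (psd_smul_real hSpsd (by positivity))).add
      (psd_smul_real hEpsd (by positivity))
  -- identity for the average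
  have hterm : ∀ x : ι, (1 - (η : ℂ) • H x) * ρ * (1 - (η : ℂ) • H x)
      = ρ - (η : ℂ) • (H x * ρ) - (η : ℂ) • (ρ * H x) + ((η ^ 2 : ℝ) : ℂ) • (H x * ρ * H x) := by
    intro x
    push_cast
    simp only [sub_mul, mul_sub, one_mul, mul_one, smul_mul_assoc, mul_smul_comm, smul_smul,
      smul_sub, mul_assoc]
    module
  have hI1 : (N⁻¹ • ∑ x : ι, (1 - (η : ℂ) • H x) * ρ * (1 - (η : ℂ) • H x))
      = ρ - A * ρ - ρ * A + ((η ^ 2 : ℝ) : ℂ) • Kbar := by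
    rw [Finset.sum_congr rfl fun x _ => hterm x]
    rw [Finset.sum_add_distrib, Finset.sum_sub_distrib, Finset.sum_sub_distrib,
      Finset.sum_const, Finset.card_univ, ← Finset.smul_sum, ← Finset.smul_sum,
      ← Finset.smul_sum, ← Finset.sum_mul, ← Finset.mul_sum]
    rw [smul_add, smul_sub, smul_sub]
    have c1 : N⁻¹ • ((Fintype.card ι) • ρ) = ρ := hNsmul ρ
    have c2 : N⁻¹ • ((η : ℂ) • ((∑ x : ι, H x) * ρ)) = A * ρ := by
      rw [hAdef, hHS, smul_mul_assoc, smul_mul_assoc, smul_comm]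
    have c3 : N⁻¹ • ((η : ℂ) • (ρ * ∑ x : ι, H x)) = ρ * A := by
      rw [hAdef, hHS, mul_smul_comm, mul_smul_comm, smul_comm]
    have c4 : N⁻¹ • (((η ^ 2 : ℝ) : ℂ) • ∑ x : ι, H x * ρ * H x)
        = ((η ^ 2 : ℝ) : ℂ) • Kbar := by
      rw [hKdef, smul_comm]
    rw [c1, c2, c3, c4]
  -- W expansions
  have hW := expand_W_add (η / 2) (2 / η) (by field_simp) S E r hSH hEH hrH
  rw [hrr] at hW
  have hWm := expand_W_sub (η / 2) (2 / η) (by field_simp) S E r hSH hEH hrH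
  rw [hrr] at hWm
  -- the two sandwich identities
  have hI2 : P - (N⁻¹ • ∑ x : ι, (1 - (η : ℂ) • H x) * ρ * (1 - (η : ℂ) • H x)
        - Bm * ρ * Bm)
      = A * ρ * A + ((1 / 2 : ℝ) : ℂ) •
        ((((η / 2 : ℝ) : ℂ) • (S * r) + ((2 / η : ℝ) : ℂ) • (E * r)) *
         (((η / 2 : ℝ) : ℂ) • (S * r) + ((2 / η : ℝ) : ℂ) • (E * r))ᴴ) := by
    rw [hI1, hW, hPdef, hSdef, hEdef]
    push_cast
    simp only [sub_mul, mul_sub, add_mul, mul_add, one_mul, mul_one, smul_add, smul_sub,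
      smul_smul, mul_assoc]
    module
  have hI3 : Q + (N⁻¹ • ∑ x : ι, (1 - (η : ℂ) • H x) * ρ * (1 - (η : ℂ) • H x)
        - Bm * ρ * Bm)
      = ((η ^ 2 : ℝ) : ℂ) • Kbar + ((1 / 2 : ℝ) : ℂ) •
        ((((η / 2 : ℝ) : ℂ) • (S * r) - ((2 / η : ℝ) : ℂ) • (E * r)) *
         (((η / 2 : ℝ) : ℂ) • (S * r) - ((2 / η : ℝ) : ℂ) • (E * r))ᴴ) := by
    rw [hI1, hWm, hQdef, hSdef, hEdef]
    push_cast
    simp only [sub_mul, mul_sub, add_mul, mul_add, one_mul, mul_one, smul_add, smul_sub,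
      smul_smul, mul_assoc]
    module
  have hPG : (P - (N⁻¹ • ∑ x : ι, (1 - (η : ℂ) • H x) * ρ * (1 - (η : ℂ) • H x)
      - Bm * ρ * Bm)).PosSemidef := by
    rw [hI2]
    exact hAρA.add (psd_smul_real (posSemidef_self_mul_conjTranspose _) (by norm_num))
  have hQG : (Q + (N⁻¹ • ∑ x : ι, (1 - (η : ℂ) • H x) * ρ * (1 - (η : ℂ) • H x)
      - Bm * ρ * Bm)).PosSemidef := by
    rw [hI3]
    exact (psd_smul_real hKpsd (by positivity)).add
      (psd_smul_real (posSemidef_self_mul_conjTranspose _) (by norm_num))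
  refine le_trans (traceNorm_le_of_sandwich hPpsd hQpsd hPG hQG) ?_
  -- trace bounds
  have hμ1 : ∀ i, μ i ≤ 1 := fun i => le_trans (hμη i) hη1
  have htrS : (S * ρ * S).trace.re ≤ 4 := by
    refine tr_conj_le hρ hρtr (c := 4) ?_
    rw [show ((4:ℝ):ℂ) = ((4:ℝ):ℂ) from rfl]
    rw [hSset, cal_mul V μ hV2 fS fS,
      show ((4 : ℝ) : ℂ) • (1 : Matrix (Fin d) (Fin d) ℂ) = cal V μ (fun _ => 4) from
        (cal_const V μ hV1 4).symm, cal_sub]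
    refine cal_psd V μ _ fun i => ?_
    have h1 := hμ0 i
    have h2 := hμ1 i
    have he1 : Real.exp (-μ i) ≤ 1 := by
      have := Real.exp_le_exp.mpr (show -μ i ≤ 0 by linarith)
      simpa using this
    have he0 : 0 < Real.exp (-μ i) := Real.exp_pos _
    simp only [hfS]
    nlinarith
  have htrE : (E * ρ * E).trace.re ≤ η ^ 4 / 4 := by
    refine tr_conj_le hρ hρtr (c := η ^ 4 / 4) ?_
    rw [hEset, cal_mul V μ hV2 fE fE,
      show ((η ^ 4 / 4 : ℝ) : ℂ) • (1 : Matrix (Fin d) (Fin d) ℂ)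
          = cal V μ (fun _ => η ^ 4 / 4) from (cal_const V μ hV1 _).symm, cal_sub]
    refine cal_psd V μ _ fun i => ?_
    have h1 := hμ0 i
    have h2 := hμη i
    have hq := exp_neg_quad h1
    have hl := Real.add_one_le_exp (-μ i)
    have hf0 : 0 ≤ fE (μ i) := by
      simp only [hfE]
      linarith
    have hfu : fE (μ i) ≤ η ^ 2 / 2 := by
      simp only [hfE]
      nlinarith
    nlinarith
  have htrA : (A * ρ * A).trace.re ≤ η ^ 2 := by
    refine tr_conj_le hρ hρtr (c := η ^ 2) ?_
    rw [hAcal, cal_mul V μ hV2 _ _,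
      show ((η ^ 2 : ℝ) : ℂ) • (1 : Matrix (Fin d) (Fin d) ℂ)
          = cal V μ (fun _ => η ^ 2) from (cal_const V μ hV1 _).symm, cal_sub]
    refine cal_psd V μ _ fun i => ?_
    have h1 := hμ0 i
    have h2 := hμη i
    nlinarith
  have htrK : Kbar.trace.re ≤ 1 := by
    rw [hKdef, Matrix.trace_smul, hNinv, smul_eq_mul, Complex.re_ofReal_mul]
    have hsum : (∑ x : ι, H x * ρ * H x).trace.re ≤ (Fintype.card ι : ℝ) := by
      rw [Matrix.trace_sum, Complex.re_sum]
      calc ∑ x : ι, ((H x * ρ * H x).trace).re ≤ ∑ _x : ι, (1 : ℝ) := by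
            refine Finset.sum_le_sum fun x _ => ?_
            have := tr_conj_le hρ hρtr (one_sub_sq_psd (hH0 x) (hH1 x))
            simpa using this
        _ = (Fintype.card ι : ℝ) := by simp
    have hcpos : (0:ℝ) < (Fintype.card ι : ℝ) := by
      exact_mod_cast Fintype.card_pos
    calc (Fintype.card ι : ℝ)⁻¹ * (∑ x : ι, H x * ρ * H x).trace.re
        ≤ (Fintype.card ι : ℝ)⁻¹ * (Fintype.card ι : ℝ) :=
          mul_le_mul_of_nonneg_left hsum (by positivity)
      _ = 1 := by field_simp
  have htrKnn : 0 ≤ Kbar.trace.re := psd_trace_re_nonneg hKpsd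
  have hsmulre : ∀ (c : ℝ) (M : Matrix (Fin d) (Fin d) ℂ),
      (((c : ℝ) : ℂ) • M).trace.re = c * M.trace.re := by
    intro c M
    rw [Matrix.trace_smul, smul_eq_mul, Complex.re_ofReal_mul]
  have hPt : P.trace.re ≤ 2 * η ^ 2 := by
    rw [hPdef, Matrix.trace_add, Matrix.trace_add, Complex.add_re, Complex.add_re,
      hsmulre, hsmulre, hsmulre]
    have e1 : (η ^ 2 : ℝ) * Kbar.trace.re ≤ η ^ 2 * 1 :=
      mul_le_mul_of_nonneg_left htrK (by positivity)
    have e2 : (η ^ 2 / 8 : ℝ) * (S * ρ * S).trace.re ≤ (η ^ 2 / 8) * 4 :=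
      mul_le_mul_of_nonneg_left htrS (by positivity)
    have e3 : (2 / η ^ 2 : ℝ) * (E * ρ * E).trace.re ≤ (2 / η ^ 2) * (η ^ 4 / 4) :=
      mul_le_mul_of_nonneg_left htrE (by positivity)
    have e4 : (2 / η ^ 2 : ℝ) * (η ^ 4 / 4) = η ^ 2 / 2 := by
      field_simp
      ring
    linarith
  have hQt : Q.trace.re ≤ 2 * η ^ 2 := by
    rw [hQdef, Matrix.trace_add, Matrix.trace_add, Complex.add_re, Complex.add_re,
      hsmulre, hsmulre]
    have e2 : (η ^ 2 / 8 : ℝ) * (S * ρ * S).trace.re ≤ (η ^ 2 / 8) * 4 :=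
      mul_le_mul_of_nonneg_left htrS (by positivity)
    have e3 : (2 / η ^ 2 : ℝ) * (E * ρ * E).trace.re ≤ (2 / η ^ 2) * (η ^ 4 / 4) :=
      mul_le_mul_of_nonneg_left htrE (by positivity)
    have e4 : (2 / η ^ 2 : ℝ) * (η ^ 4 / 4) = η ^ 2 / 2 := by
      field_simp
      ring
    linarith
  linarith
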